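/- (Second-moment bound on the two-sided randomized difference) Let f : ℝ^m → ℝ be L-Lipschitz with respect to the Euclidean norm, let x ∈ ℝ^m and c > 0. Let Δ = (Δ^1, ..., Δ^m) be a random vector with |Δ^p| ≤ a and |1/Δ^p| ≤ b almost surely for every component p, and let ε be a real random variable independent of Δ with E[ε²] ≤ e². Define the randomized difference d = [f(x + cΔ) − f(x − cΔ) + ε] Δ⁻ / (2c), where Δ⁻ = (1/Δ^1, ..., 1/Δ^m). Then E‖d‖₂² ≤ (m a b L + (√m b e)/(2c))². -/

import Mathlib

open MeasureTheory ProbabilityTheory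

private lemma euclid_norm_le_sqrt_mul {m : ℕ} (v : EuclideanSpace ℝ (Fin m)) (r : ℝ)
    (hr : 0 ≤ r) (h : ∀ p, |v p| ≤ r) : ‖v‖ ≤ Real.sqrt m * r := by
  rw [EuclideanSpace.norm_eq]
  have hsum : ∑ p, ‖v p‖ ^ 2 ≤ (m : ℝ) * r ^ 2 := by
    calc ∑ p, ‖v p‖ ^ 2 ≤ ∑ _p : Fin m, r ^ 2 :=
          Finset.sum_le_sum fun p _ => by
            rw [Real.norm_eq_abs]
            exact pow_le_pow_left₀ (abs_nonneg _) (h p) 2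
      _ = (m : ℝ) * r ^ 2 := by simp [Finset.sum_const, Finset.card_univ, mul_comm]
  calc Real.sqrt (∑ p, ‖v p‖ ^ 2) ≤ Real.sqrt ((m : ℝ) * r ^ 2) := Real.sqrt_le_sqrt hsum
    _ = Real.sqrt m * r := by
        rw [Real.sqrt_mul (Nat.cast_nonneg m), Real.sqrt_sq hr]

private lemma integral_abs_le_of_sq {Ω : Type*} [MeasurableSpace Ω] (μ : Measure Ω)
    [IsProbabilityMeasure μ] (ε : Ω → ℝ) (e : ℝ) (he : 0 < e)
    (hεmem : MemLp ε 2 μ) (hε2 : ∫ ω, (ε ω) ^ 2 ∂μ ≤ e ^ 2) :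
    ∫ ω, |ε ω| ∂μ ≤ e := by
  have hpq : Real.HolderConjugate 2 2 := Real.HolderConjugate.two_two
  have habs : MemLp (fun ω => |ε ω|) (ENNReal.ofReal 2) μ := by
    have : (ENNReal.ofReal 2) = 2 := by norm_num
    rw [this]; exact hεmem.abs
  have hone : MemLp (fun _ : Ω => (1 : ℝ)) (ENNReal.ofReal 2) μ := memLp_const 1
  have h := integral_mul_le_Lp_mul_Lq_of_nonneg hpq
    (Filter.Eventually.of_forall fun ω => abs_nonneg (ε ω))
    (Filter.Eventually.of_forall fun _ => zero_le_one) habs hone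
  simp only [mul_one] at h
  have h1 : ∫ ω, |ε ω| ^ (2 : ℝ) ∂μ = ∫ ω, (ε ω) ^ 2 ∂μ := by
    apply integral_congr_ae
    filter_upwards with ω
    rw [show ((2 : ℝ)) = ((2 : ℕ) : ℝ) by norm_num, Real.rpow_natCast, sq_abs]
  have h2 : ∫ _ω : Ω, (1 : ℝ) ^ (2 : ℝ) ∂μ = 1 := by simp
  rw [h1, h2] at h
  simp only [Real.one_rpow, mul_one] at h
  refine h.trans ?_
  have hnn : (0 : ℝ) ≤ ∫ ω, (ε ω) ^ 2 ∂μ := integral_nonneg fun ω => sq_nonneg _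
  calc (∫ ω, (ε ω) ^ 2 ∂μ) ^ ((1 : ℝ) / 2) ≤ (e ^ 2) ^ ((1 : ℝ) / 2) :=
        Real.rpow_le_rpow hnn hε2 (by norm_num)
    _ = e := by
        rw [show (e ^ 2) = e ^ ((2 : ℕ) : ℝ) by rw [Real.rpow_natCast],
          ← Real.rpow_mul he.le]
        norm_num

/-- The two-sided randomized difference
`d = [f(x + cΔ) − f(x − cΔ) + ε] Δ⁻ / (2c)`, where `Δ⁻` is the vector of
componentwise reciprocals of `Δ`. -/
noncomputable def twoSidedDiff {m : ℕ} (f : EuclideanSpace ℝ (Fin m) → ℝ) (c : ℝ)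
    (x Δ : EuclideanSpace ℝ (Fin m)) (e : ℝ) : EuclideanSpace ℝ (Fin m) :=
  ((f (x + c • Δ) - f (x - c • Δ) + e) / (2 * c)) •
    (WithLp.toLp 2 (fun p => (Δ p)⁻¹) : EuclideanSpace ℝ (Fin m))

/-- Second-moment bound on the two-sided randomized difference:
`E‖d‖₂² ≤ (m a b L + √m b e / (2c))²`. -/
theorem twoSidedDiff_second_moment_bound
    {Ω : Type*} [MeasurableSpace Ω] (μ : Measure Ω) [IsProbabilityMeasure μ]
    (m : ℕ) (f : EuclideanSpace ℝ (Fin m) → ℝ) (L a b c e : ℝ)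
    (hL : 0 < L) (ha : 0 < a) (hb : 0 < b) (hc : 0 < c) (he : 0 < e)
    (hf : ∀ x y : EuclideanSpace ℝ (Fin m), |f x - f y| ≤ L * ‖x - y‖)
    (x : EuclideanSpace ℝ (Fin m))
    (Δ : Ω → EuclideanSpace ℝ (Fin m)) (ε : Ω → ℝ)
    (hΔmeas : Measurable Δ) (hεmeas : Measurable ε)
    (hΔne : ∀ᵐ ω ∂μ, ∀ p, Δ ω p ≠ 0)
    (hΔbound : ∀ᵐ ω ∂μ, ∀ p, |Δ ω p| ≤ a ∧ |(Δ ω p)⁻¹| ≤ b)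
    (hindep : IndepFun ε Δ μ)
    (hεmem : MemLp ε 2 μ) (hε2 : ∫ ω, (ε ω) ^ 2 ∂μ ≤ e ^ 2) :
    ∫ ω, ‖twoSidedDiff f c x (Δ ω) (ε ω)‖ ^ 2 ∂μ ≤
      (m * a * b * L + Real.sqrt m * b * e / (2 * c)) ^ 2 := by
  set S : ℝ := Real.sqrt m with hS
  have hS0 : 0 ≤ S := Real.sqrt_nonneg _
  have hSS : S * S = (m : ℝ) := Real.mul_self_sqrt (Nat.cast_nonneg m)
  set K : ℝ := 2 * c * L * (S * a) with hK
  have hK0 : 0 ≤ K := by positivity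
  set C : ℝ := (S * b / (2 * c)) ^ 2 with hC
  have hC0 : 0 ≤ C := sq_nonneg _
  set g : Ω → ℝ := fun ω => C * (K + |ε ω|) ^ 2 with hg
  -- f is continuous
  have hfc : Continuous f := by
    rw [Metric.continuous_iff]
    intro y δ hδ
    refine ⟨δ / L, by positivity, fun z hz => ?_⟩
    calc dist (f z) (f y) = |f z - f y| := Real.dist_eq _ _
      _ ≤ L * ‖z - y‖ := hf z y
      _ < L * (δ / L) := by
          apply mul_lt_mul_of_pos_left _ hL
          rwa [← dist_eq_norm]
      _ = δ := by field_simp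
  -- measurability
  have hd_meas : Measurable fun ω => twoSidedDiff f c x (Δ ω) (ε ω) := by
    have h1 : Measurable fun ω =>
        (f (x + c • Δ ω) - f (x - c • Δ ω) + ε ω) / (2 * c) := by
      have hA : Measurable fun ω => f (x + c • Δ ω) :=
        (hfc.measurable).comp
          (((continuous_const.add (continuous_id.const_smul c)).measurable).comp hΔmeas)
      have hB : Measurable fun ω => f (x - c • Δ ω) :=
        (hfc.measurable).comp
          (((continuous_const.sub (continuous_id.const_smul c)).measurable).comp hΔmeas)
      exact ((hA.sub hB).add hεmeas).div_const _
    have h2 : Measurable fun ω => (WithLp.toLp 2 (fun p => (Δ ω p)⁻¹) : EuclideanSpace ℝ (Fin m)) := by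
      apply (WithLp.measurable_toLp 2 _).comp
      apply measurable_pi_lambda
      intro p
      exact ((measurable_pi_apply p).comp ((WithLp.measurable_ofLp 2 _).comp hΔmeas)).inv
    exact h1.smul h2
  have hd_sq_meas : AEStronglyMeasurable
      (fun ω => ‖twoSidedDiff f c x (Δ ω) (ε ω)‖ ^ 2) μ :=
    (hd_meas.norm.pow_const 2).aestronglyMeasurable
  -- integrabilities
  have hint_abs : Integrable (fun ω => |ε ω|) μ := (hεmem.integrable one_le_two).abs
  have hint_sq : Integrable (fun ω => (ε ω) ^ 2) μ := hεmem.integrable_sq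
  have hexp : (fun ω => (K + |ε ω|) ^ 2)
      = fun ω => K ^ 2 + 2 * K * |ε ω| + (ε ω) ^ 2 := by
    funext ω; rw [add_sq, sq_abs]
  have hint_g2 : Integrable (fun ω => (K + |ε ω|) ^ 2) μ := by
    rw [hexp]
    exact ((integrable_const (K ^ 2)).add (hint_abs.const_mul (2 * K))).add hint_sq
  have hint_g : Integrable g μ := hint_g2.const_mul C
  -- pointwise a.e. bound
  have hpt : ∀ᵐ ω ∂μ, ‖twoSidedDiff f c x (Δ ω) (ε ω)‖ ^ 2 ≤ g ω := by
    filter_upwards [hΔne, hΔbound] with ω hne hbd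
    have hnormΔ : ‖Δ ω‖ ≤ S * a :=
      euclid_norm_le_sqrt_mul (Δ ω) a ha.le fun p => (hbd p).1
    set v : EuclideanSpace ℝ (Fin m) := WithLp.toLp 2 (fun p => (Δ ω p)⁻¹) with hv
    have hnormv : ‖v‖ ≤ S * b :=
      euclid_norm_le_sqrt_mul v b hb.le fun p => (hbd p).2
    set A : ℝ := f (x + c • Δ ω) - f (x - c • Δ ω) with hA
    have hAbound : |A| ≤ K := by
      have h1 := hf (x + c • Δ ω) (x - c • Δ ω)
      have hdiff : (x + c • Δ ω) - (x - c • Δ ω) = (2 * c) • Δ ω := by module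
      rw [hdiff, norm_smul, Real.norm_eq_abs, abs_of_pos (show (0:ℝ) < 2 * c by linarith)] at h1
      calc |A| ≤ L * (2 * c * ‖Δ ω‖) := h1
        _ ≤ K := by
            rw [hK]
            nlinarith [mul_le_mul_of_nonneg_left hnormΔ
              (show (0:ℝ) ≤ 2 * c * L by positivity)]
    have hsbound : |(A + ε ω) / (2 * c)| ≤ (K + |ε ω|) / (2 * c) := by
      rw [abs_div, abs_of_pos (by linarith : (0:ℝ) < 2 * c)]
      apply div_le_div_of_nonneg_right ?_ (by linarith)
      calc |A + ε ω| ≤ |A| + |ε ω| := abs_add_le _ _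
        _ ≤ K + |ε ω| := add_le_add_left hAbound _
    have hnorm : ‖twoSidedDiff f c x (Δ ω) (ε ω)‖
        ≤ (K + |ε ω|) / (2 * c) * (S * b) := by
      rw [twoSidedDiff, norm_smul, Real.norm_eq_abs]
      exact mul_le_mul hsbound hnormv (norm_nonneg _)
        (by positivity)
    calc ‖twoSidedDiff f c x (Δ ω) (ε ω)‖ ^ 2
        ≤ ((K + |ε ω|) / (2 * c) * (S * b)) ^ 2 :=
          pow_le_pow_left₀ (norm_nonneg _) hnorm 2
      _ = g ω := by rw [hg, hC]; ring
  -- integrability of the lhs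
  have hint_d : Integrable (fun ω => ‖twoSidedDiff f c x (Δ ω) (ε ω)‖ ^ 2) μ := by
    refine hint_g.mono' hd_sq_meas ?_
    filter_upwards [hpt] with ω hω
    rw [Real.norm_eq_abs, abs_of_nonneg (by positivity)]
    exact hω
  -- integrate
  have hstep : ∫ ω, ‖twoSidedDiff f c x (Δ ω) (ε ω)‖ ^ 2 ∂μ ≤ ∫ ω, g ω ∂μ :=
    integral_mono_ae hint_d hint_g hpt
  refine hstep.trans ?_
  -- compute ∫ g
  have hIabs : ∫ ω, |ε ω| ∂μ ≤ e := integral_abs_le_of_sq μ ε e he hεmem hε2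
  have hg2 : ∫ ω, (K + |ε ω|) ^ 2 ∂μ ≤ (K + e) ^ 2 := by
    rw [hexp]
    have hadd1 : Integrable (fun ω => K ^ 2 + 2 * K * |ε ω|) μ :=
      (integrable_const _).add (hint_abs.const_mul _)
    have hadd0 : Integrable (fun _ : Ω => K ^ 2) μ := integrable_const _
    rw [integral_add hadd1 hint_sq, integral_add hadd0 (hint_abs.const_mul (2 * K)),
      integral_const, integral_const_mul]
    simp only [measureReal_def, measure_univ, ENNReal.toReal_one, smul_eq_mul, one_mul]
    nlinarith [hIabs, hε2]
  have hgeq : ∫ ω, g ω ∂μ = C * ∫ ω, (K + |ε ω|) ^ 2 ∂μ := integral_const_mul C _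
  rw [hgeq]
  calc C * ∫ ω, (K + |ε ω|) ^ 2 ∂μ ≤ C * (K + e) ^ 2 :=
        mul_le_mul_of_nonneg_left hg2 hC0
    _ = (S * b / (2 * c) * (K + e)) ^ 2 := by rw [hC, mul_pow]
    _ = ((m : ℝ) * a * b * L + S * b * e / (2 * c)) ^ 2 := by
        congr 1
        have hSS2 : S ^ 2 = (m : ℝ) := by rw [sq]; exact hSS
        rw [hK]
        field_simp
        linear_combination (2 * c * L * a) * hSS2
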